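/- Let A be a complex unital Banach algebra and let f : ℂ → A be analytic on a neighborhood of z, with f(w) a unit of A for all w near z and f'(z) a unit of A. Define S₁(f)(z) = −(1/2)·f'(z)⁻¹·f'''(z) + (3/4)·(f'(z)⁻¹·f''(z))², and let g(w) = f(w)⁻¹ (analytic near z, with g'(z) a unit). Then S₁(g)(z) = f(z)·S₁(f)(z)·f(z)⁻¹. -/

import Mathlib

open Filter

section Aux

variable {A : Type*} [NormedRing A] [NormedAlgebra ℂ A] [CompleteSpace A]

lemma analyticAt_deriv' {f : ℂ → A} {z : ℂ} (h : AnalyticAt ℂ f z) :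
    AnalyticAt ℂ (deriv f) z := by
  have : AnalyticAt ℂ (fun y => (fderiv ℂ f y) (1 : ℂ)) z :=
    ((ContinuousLinearMap.apply ℂ A (1 : ℂ)).analyticAt _).comp h.fderiv
  exact this.congr (Eventually.of_forall fun y => rfl)

lemma hasDerivAt_ringInverse_comp {f : ℂ → A} {w : ℂ}
    (hf : DifferentiableAt ℂ f w) (hu : IsUnit (f w)) :
    HasDerivAt (fun x => Ring.inverse (f x))
      (-(Ring.inverse (f w) * deriv f w * Ring.inverse (f w))) w := by
  obtain ⟨u, hu'⟩ := hu
  have h1 := hasFDerivAt_ringInverse (𝕜 := ℂ) u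
  rw [hu'] at h1
  have h2 := h1.comp_hasDerivAt w hf.hasDerivAt
  have hi : ((u⁻¹ : Aˣ) : A) = Ring.inverse (f w) := by
    rw [← hu', Ring.inverse_unit]
  simpa [← hi, Function.comp_def] using h2

end Aux

lemma S1_key {A : Type*} [Ring A] [Algebra ℂ A] (a b p q r s : A)
    (hab : a * b = 1) (hba : b * a = 1) (hpq : p * q = 1) (hqp : q * p = 1) :
    (-(1 / 2) : ℂ) • (-(a * q * a) *
        (b*r*b*p*b + b*r*b*p*b + b*r*b*p*b + b*p*b*r*b + b*p*b*r*b + b*p*b*r*b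
          - (b*p*b*p*b*p*b + b*p*b*p*b*p*b + b*p*b*p*b*p*b + b*p*b*p*b*p*b
              + b*p*b*p*b*p*b + b*p*b*p*b*p*b)
          - b*s*b))
      + ((3 / 4) : ℂ) • (-(a * q * a) * (b*p*b*p*b + b*p*b*p*b - b*r*b)) ^ 2
    = a * ((-(1 / 2) : ℂ) • (q * s) + ((3 / 4) : ℂ) • (q * r) ^ 2) * b := by
  have Ha : ∀ x : A, a * (b * x) = x := fun x => by rw [← mul_assoc, hab, one_mul]
  have Hb : ∀ x : A, b * (a * x) = x := fun x => by rw [← mul_assoc, hba, one_mul]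
  have Hp : ∀ x : A, p * (q * x) = x := fun x => by rw [← mul_assoc, hpq, one_mul]
  have Hq : ∀ x : A, q * (p * x) = x := fun x => by rw [← mul_assoc, hqp, one_mul]
  simp only [pow_two, mul_add, add_mul, mul_sub, sub_mul, mul_neg, neg_mul, neg_neg,
    smul_add, smul_sub, smul_neg, neg_smul, mul_smul_comm, smul_mul_assoc,
    mul_assoc, Ha, Hb, Hp, Hq, hab, hba, hpq, hqp, mul_one, one_mul]
  module

/-- The lowest noncommutative Schwarzian
`S₁(f)(z) = −(1/2)·f'(z)⁻¹·f'''(z) + (3/4)·(f'(z)⁻¹·f''(z))²`. -/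
noncomputable def S1 {A : Type*} [NormedRing A] [NormedAlgebra ℂ A]
    (f : ℂ → A) (z : ℂ) : A :=
  (-(1 / 2) : ℂ) • (Ring.inverse (deriv f z) * deriv (deriv (deriv f)) z)
    + ((3 / 4) : ℂ) • (Ring.inverse (deriv f z) * deriv (deriv f) z) ^ 2

/-- The inversion case (`𝔠 = 1, 𝔡 = 0`) of the projective semi-invariance of the
noncommutative Schwarzian `S₁`: `S₁(f⁻¹)(z) = f(z)·S₁(f)(z)·f(z)⁻¹`. -/
theorem S1_semi_invariance_inversion
    (A : Type*) [NormedRing A] [NormedAlgebra ℂ A] [CompleteSpace A]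
    (f g : ℂ → A) (z : ℂ)
    (hf : AnalyticAt ℂ f z)
    (hfu : ∀ᶠ w in nhds z, IsUnit (f w))
    (hf' : IsUnit (deriv f z))
    (hg : g = fun w => Ring.inverse (f w))
    (hg' : IsUnit (deriv g z)) :
    S1 g z = f z * S1 f z * Ring.inverse (f z) := by
  subst hg
  set G : ℂ → A := fun w => Ring.inverse (f w) with hGdef
  have hev : ∀ᶠ w in nhds z, AnalyticAt ℂ f w ∧ IsUnit (f w) :=
    hf.eventually_analyticAt.and hfu
  have H1 : ∀ᶠ w in nhds z, HasDerivAt G (-(G w * deriv f w * G w)) w := by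
    filter_upwards [hev] with w hw
    exact hasDerivAt_ringInverse_comp hw.1.differentiableAt hw.2
  have hd1 : deriv G =ᶠ[nhds z] fun w => -(G w * deriv f w * G w) :=
    H1.mono fun w h => h.deriv
  have hd2 : deriv (fun w => -(G w * deriv f w * G w)) =ᶠ[nhds z]
      fun w => G w * deriv f w * G w * deriv f w * G w
        + G w * deriv f w * G w * deriv f w * G w
        - G w * deriv (deriv f) w * G w := by
    filter_upwards [hev, H1] with w hw h1
    have hf2 : HasDerivAt (deriv f) (deriv (deriv f) w) w :=
      (analyticAt_deriv' hw.1).differentiableAt.hasDerivAt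
    have hD := ((h1.mul hf2).mul h1).neg
    refine hD.deriv.trans ?_
    simp only [Pi.mul_apply]
    noncomm_ring
  have hd2' : deriv (deriv G) =ᶠ[nhds z]
      fun w => G w * deriv f w * G w * deriv f w * G w
        + G w * deriv f w * G w * deriv f w * G w
        - G w * deriv (deriv f) w * G w :=
    hd1.deriv.trans hd2
  have hz1 : HasDerivAt G (-(G z * deriv f z * G z)) z := H1.self_of_nhds
  have hfd2 : HasDerivAt (deriv f) (deriv (deriv f) z) z :=
    (analyticAt_deriv' hf).differentiableAt.hasDerivAt
  have hfd3 : HasDerivAt (deriv (deriv f)) (deriv (deriv (deriv f)) z) z :=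
    (analyticAt_deriv' (analyticAt_deriv' hf)).differentiableAt.hasDerivAt
  have hGz : G z = Ring.inverse (f z) := rfl
  have hfz : IsUnit (f z) := hfu.self_of_nhds
  have hab : f z * Ring.inverse (f z) = 1 := Ring.mul_inverse_cancel (f z) hfz
  have hba : Ring.inverse (f z) * f z = 1 := Ring.inverse_mul_cancel (f z) hfz
  have hpq : deriv f z * Ring.inverse (deriv f z) = 1 :=
    Ring.mul_inverse_cancel (deriv f z) hf'
  have hqp : Ring.inverse (deriv f z) * deriv f z = 1 :=
    Ring.inverse_mul_cancel (deriv f z) hf'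
  have e1 : deriv G z = -(G z * deriv f z * G z) := hz1.deriv
  have e2 : deriv (deriv G) z
      = G z * deriv f z * G z * deriv f z * G z
        + G z * deriv f z * G z * deriv f z * G z
        - G z * deriv (deriv f) z * G z := hd2'.eq_of_nhds
  have hT := (((hz1.mul hfd2).mul hz1).mul hfd2).mul hz1
  have hU := (hz1.mul hfd3).mul hz1
  have hSum := (hT.add hT).sub hU
  have e3 : deriv (deriv (deriv G)) z
      = G z * deriv (deriv f) z * G z * deriv f z * G z
        + G z * deriv (deriv f) z * G z * deriv f z * G z
        + G z * deriv (deriv f) z * G z * deriv f z * G z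
        + G z * deriv f z * G z * deriv (deriv f) z * G z
        + G z * deriv f z * G z * deriv (deriv f) z * G z
        + G z * deriv f z * G z * deriv (deriv f) z * G z
        - (G z * deriv f z * G z * deriv f z * G z * deriv f z * G z
            + G z * deriv f z * G z * deriv f z * G z * deriv f z * G z
            + G z * deriv f z * G z * deriv f z * G z * deriv f z * G z
            + G z * deriv f z * G z * deriv f z * G z * deriv f z * G z
            + G z * deriv f z * G z * deriv f z * G z * deriv f z * G z
            + G z * deriv f z * G z * deriv f z * G z * deriv f z * G z)
        - G z * deriv (deriv (deriv f)) z * G z := by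
    refine (hd2'.deriv.eq_of_nhds).trans (hSum.deriv.trans ?_)
    simp only [Pi.mul_apply]
    noncomm_ring
  have Ha : ∀ x : A, f z * (Ring.inverse (f z) * x) = x := fun x => by
    rw [← mul_assoc, hab, one_mul]
  have Hb : ∀ x : A, Ring.inverse (f z) * (f z * x) = x := fun x => by
    rw [← mul_assoc, hba, one_mul]
  have Hp : ∀ x : A, deriv f z * (Ring.inverse (deriv f z) * x) = x := fun x => by
    rw [← mul_assoc, hpq, one_mul]
  have Hq : ∀ x : A, Ring.inverse (deriv f z) * (deriv f z * x) = x := fun x => by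
    rw [← mul_assoc, hqp, one_mul]
  have hone1 : (-(G z * deriv f z * G z)) * (-(f z * Ring.inverse (deriv f z) * f z)) = 1 := by
    simp only [hGz, mul_neg, neg_mul, neg_neg, mul_assoc, Ha, Hb, Hp, Hq,
      hba, hab, hpq, hqp, mul_one]
  have hone2 : (-(f z * Ring.inverse (deriv f z) * f z)) * (-(G z * deriv f z * G z)) = 1 := by
    simp only [hGz, mul_neg, neg_mul, neg_neg, mul_assoc, Ha, Hb, Hp, Hq,
      hba, hab, hpq, hqp, mul_one]
  have hinv : Ring.inverse (deriv G z)
      = -(f z * Ring.inverse (deriv f z) * f z) := by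
    have h1 : deriv G z * (-(f z * Ring.inverse (deriv f z) * f z)) = 1 := by
      rw [e1]; exact hone1
    have h2 : (-(f z * Ring.inverse (deriv f z) * f z)) * deriv G z = 1 := by
      rw [e1]; exact hone2
    exact Ring.inverse_unit ⟨deriv G z, -(f z * Ring.inverse (deriv f z) * f z), h1, h2⟩
  simp only [S1]
  rw [hinv, e3, e2, hGz]
  exact S1_key (f z) (Ring.inverse (f z)) (deriv f z) (Ring.inverse (deriv f z))
    (deriv (deriv f) z) (deriv (deriv (deriv f)) z) hab hba hpq hqp
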